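/- Let G be a chordal graph and I ⊆ V(G). Then the graph G′ = G − E(G[I]) obtained by deleting all edges between vertices of I is a perfect graph. -/

import Mathlib

open SimpleGraph

variable {V : Type*}

/-- Number of connected components of a graph. -/
noncomputable def numComponents (G : SimpleGraph V) : ℕ := Nat.card G.ConnectedComponent

/-- A vertex is a cut vertex if its removal increases the number of connected components. -/
def IsCutVertex (G : SimpleGraph V) (v : V) : Prop :=
  numComponents G < numComponents (G.induce {u | u ≠ v})

/-- `T` is a spanning tree of `G`: a subgraph on all vertices of `G` that is a tree. -/
def IsSpanningTree (G T : SimpleGraph V) : Prop := T ≤ G ∧ T.IsTree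

/-- `v` is dominated by `S` in the graph `T`. -/
def DominatedIn (T : SimpleGraph V) (S : Set V) (v : V) : Prop :=
  v ∈ S ∨ ∃ u ∈ S, T.Adj v u

/-- `v` is simultaneously dominated by `S`: dominated in every spanning tree of `G`. -/
def SimDominated (G : SimpleGraph V) (S : Set V) (v : V) : Prop :=
  ∀ T : SimpleGraph V, IsSpanningTree G T → DominatedIn T S v

/-- `S` is a simultaneous dominating set of `G`. -/
def IsSDSet (G : SimpleGraph V) (S : Set V) : Prop := ∀ v, SimDominated G S v

/-- `C` is a vertex cover of `G`. -/
def IsVertexCover (G : SimpleGraph V) (C : Set V) : Prop :=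
  ∀ ⦃u v : V⦄, G.Adj u v → u ∈ C ∨ v ∈ C

/-- A block of `G`: a maximal vertex set inducing a connected subgraph without cut vertices. -/
def IsBlock (G : SimpleGraph V) (B : Set V) : Prop :=
  B.Nonempty ∧ (G.induce B).Connected ∧ (∀ x, ¬ IsCutVertex (G.induce B) x) ∧
    ∀ B' : Set V, B ⊆ B' → (G.induce B').Connected →
      (∀ x, ¬ IsCutVertex (G.induce B') x) → B' = B

/-- 2-connected: connected, at least 3 vertices, no cut vertex. -/
def TwoConnected (G : SimpleGraph V) [Fintype V] : Prop :=
  G.Connected ∧ 3 ≤ Fintype.card V ∧ ∀ v, ¬ IsCutVertex G v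

/-- Colours 1, 0, 0̂. -/
inductive Col : Type
  | one | zero | zhat
deriving DecidableEq

/-- `S` is an `f`-respecting simultaneous dominating set of `G`. -/
def RespSDS (G : SimpleGraph V) (f : V → Col) (S : Set V) : Prop :=
  (∀ v, f v = Col.one → v ∈ S) ∧ ∀ v, f v = Col.zhat → SimDominated G S v

/-- A minimum `f`-respecting simultaneous dominating set. -/
def MinRespSDS (G : SimpleGraph V) (f : V → Col) (S : Set V) : Prop :=
  RespSDS G f S ∧ ∀ S' : Set V, RespSDS G f S' → S.ncard ≤ S'.ncard

/-- A graph is chordal iff it has no induced cycle of length at least 4. -/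
def IsChordal (G : SimpleGraph V) : Prop :=
  ∀ n : ℕ, 4 ≤ n → IsEmpty (SimpleGraph.cycleGraph n ↪g G)

/-- `G − E(G[I])`: delete all edges between vertices of `I`. -/
def removeInside (G : SimpleGraph V) (I : Set V) : SimpleGraph V where
  Adj u w := G.Adj u w ∧ ¬(u ∈ I ∧ w ∈ I)
  symm := ⟨fun u w ⟨h, h'⟩ => ⟨h.symm, fun ⟨a, b⟩ => h' ⟨b, a⟩⟩⟩
  loopless := ⟨fun u h => G.loopless.irrefl u h.1⟩

/-- `G` has an odd hole: an induced cycle of odd length at least 5. -/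
def HasOddHole (G : SimpleGraph V) : Prop :=
  ∃ n : ℕ, 5 ≤ n ∧ Odd n ∧ Nonempty (SimpleGraph.cycleGraph n ↪g G)

/-- Perfect graph, via the strong perfect graph theorem characterization:
no odd hole and no odd antihole (an odd antihole of `G` is an odd hole of `Gᶜ`). -/
def IsPerfect (G : SimpleGraph V) : Prop := ¬ HasOddHole G ∧ ¬ HasOddHole Gᶜ


open Finset
open Fin.NatCast

lemma mod_eq_iff' {n k r : ℕ} (hn : 0 < n) (hk : k < 2 * n) (hr : r < n) :
    k % n = r ↔ (k = r ∨ k = n + r) := by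
  rcases Nat.lt_or_ge k n with h | h
  · rw [Nat.mod_eq_of_lt h]; omega
  · rw [Nat.mod_eq_sub_mod h, Nat.mod_eq_of_lt (by omega)]; omega

lemma fin_cast_inj {n a b : ℕ} [NeZero n] (ha : a < n) (hb : b < n)
    (h : (a : Fin n) = (b : Fin n)) : a = b := by
  have := congrArg Fin.val h
  rwa [Fin.val_natCast, Fin.val_natCast, Nat.mod_eq_of_lt ha, Nat.mod_eq_of_lt hb] at this

/-- consecutiveness on ℕ indices mod n -/
def Consec (n a b : ℕ) : Prop := b = a + 1 ∨ (a + 1 = n ∧ b = 0)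

lemma cycleGraph_adj_iff_consec {n : ℕ} (hn2 : 2 ≤ n) {u v : Fin n} :
    (cycleGraph n).Adj u v ↔ Consec n u.val v.val ∨ Consec n v.val u.val := by
  have h1 : ∀ a b : Fin n, (a - b).val = 1 ↔ Consec n b.val a.val := by
    intro a b
    have ha := a.isLt; have hb := b.isLt
    rw [Fin.sub_def]
    simp only [Consec, Fin.val_mk]
    rw [mod_eq_iff' (by omega) (by omega) (by omega)]
    omega
  rw [cycleGraph_adj', h1, h1]
  tauto

lemma cycleGraph_no_triangle {n : ℕ} (hn : 4 ≤ n) {a b c : Fin n}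
    (hab : (cycleGraph n).Adj a b) (hbc : (cycleGraph n).Adj b c)
    (hac : (cycleGraph n).Adj a c) : False := by
  have nab : a ≠ b := hab.ne
  have nbc : b ≠ c := hbc.ne
  have nac : a ≠ c := hac.ne
  rw [cycleGraph_adj_iff_consec (by omega)] at hab hbc hac
  have := a.isLt; have := b.isLt; have := c.isLt
  have h1 : a.val ≠ b.val := fun h => nab (Fin.ext h)
  have h2 : b.val ≠ c.val := fun h => nbc (Fin.ext h)
  have h3 : a.val ≠ c.val := fun h => nac (Fin.ext h)
  simp only [Consec] at hab hbc hac
  omega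

open scoped Classical in
lemma removeInside_key {V : Type*} (G : SimpleGraph V) (I : Set V) (hG : IsChordal G)
    {n : ℕ} (hn : 4 ≤ n) (e : cycleGraph n ↪g removeInside G I) :
    ∀ m : ℕ, 3 ≤ m → ∀ c : ℕ → V,
      (∀ i j, i < m → j < m → c i = c j → i = j) →
      c m = c 0 →
      (∀ i, i < m → G.Adj (c i) (c (i+1))) →
      (∀ i, i < m → ∃ a : Fin n, c i = e a) →
      Odd (((Finset.range m).filter (fun i => ¬(c i ∈ I ∧ c (i+1) ∈ I))).card) → False := by
  have hGadj : ∀ a b : Fin n, (removeInside G I).Adj (e a) (e b) ↔ (cycleGraph n).Adj a b :=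
    fun a b => e.map_adj_iff
  intro m
  induction m using Nat.strong_induction_on with
  | _ m IH =>
  intro hm3 c hinj hcyc hedge hrange hodd
  rcases eq_or_lt_of_le hm3 with hm | hm4
  · -- base case : m = 3
    subst hm
    obtain ⟨a0, h0⟩ := hrange 0 (by norm_num)
    obtain ⟨a1, h1⟩ := hrange 1 (by norm_num)
    obtain ⟨a2, h2⟩ := hrange 2 (by norm_num)
    have tri : ¬(c 0 ∈ I ∧ c 1 ∈ I) → ¬(c 1 ∈ I ∧ c 2 ∈ I) → ¬(c 2 ∈ I ∧ c 0 ∈ I) → False := by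
      intro s0 s1 s2
      have e01 : (removeInside G I).Adj (c 0) (c 1) := ⟨hedge 0 (by norm_num), s0⟩
      have e12 : (removeInside G I).Adj (c 1) (c 2) := ⟨hedge 1 (by norm_num), s1⟩
      have e20 : (removeInside G I).Adj (c 2) (c 0) := by
        refine ⟨?_, s2⟩
        have := hedge 2 (by norm_num)
        rwa [hcyc] at this
      rw [h0, h1] at e01; rw [h1, h2] at e12; rw [h2, h0] at e20
      exact cycleGraph_no_triangle hn ((hGadj _ _).1 e01) ((hGadj _ _).1 e12)
        (((hGadj _ _).1 e20).symm)
    rw [Finset.card_filter, Finset.sum_range_succ, Finset.sum_range_succ,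
      Finset.sum_range_one] at hodd
    by_cases hI0 : c 0 ∈ I <;> by_cases hI1 : c 1 ∈ I <;> by_cases hI2 : c 2 ∈ I <;>
      first
        | (simp only [hcyc, hI0, hI1, hI2, and_true, and_false, true_and, false_and,
            not_true, not_false_iff, if_true, if_false, not_true_eq_false, not_false_eq_true,
            Nat.odd_iff] at hodd; omega)
        | exact tri (by tauto) (by tauto) (by tauto)
  · -- inductive step, m ≥ 4
    by_cases hch : ∃ a b, a < b ∧ b < m ∧ 2 ≤ b - a ∧ b - a ≤ m - 2 ∧ G.Adj (c a) (c b)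
    · obtain ⟨a, b, hab, hbm, h2d, hdm, hadj⟩ := hch
      set d := b - a with hd
      -- the two subcycles
      set c1 : ℕ → V := fun i => c (a + i % (d+1)) with hc1def
      set c2 : ℕ → V := fun i => c ((b + i % (m - d + 1)) % m) with hc2def
      have hv1 : ∀ i, i ≤ d → c1 i = c (a + i) := by
        intro i hi
        simp only [hc1def]
        rw [Nat.mod_eq_of_lt (by omega)]
      have hv1top : c1 (d+1) = c a := by
        simp only [hc1def]
        rw [Nat.mod_self, Nat.add_zero]
      have hv2 : ∀ i, i ≤ m - d → c2 i = c ((b + i) % m) := by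
        intro i hi
        simp only [hc2def]
        rw [Nat.mod_eq_of_lt (show i < m - d + 1 by omega)]
      have hv2top : c2 (m - d + 1) = c b := by
        simp only [hc2def]
        rw [Nat.mod_self, Nat.add_zero, Nat.mod_eq_of_lt hbm]
      have hmod1 : ∀ i : ℕ, b + i < m → (b + i) % m = b + i := fun i h => Nat.mod_eq_of_lt h
      have hmod2 : ∀ i : ℕ, m ≤ b + i → b + i < 2*m → (b + i) % m = b + i - m := by
        intro i g1 g2
        rw [Nat.mod_eq_sub_mod g1, Nat.mod_eq_of_lt (by omega)]
      -- values of c2 at successors, folding the wrap-around c m = c 0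
      have hv2succ : ∀ i, i + 1 ≤ m - d → b + i + 1 ≤ m → c2 (i+1) = c (b+i+1) := by
        intro i hi hbi
        rw [hv2 (i+1) hi]
        rcases eq_or_lt_of_le hbi with hh | hh
        · rw [show b + (i+1) = m by omega, Nat.mod_self, show b+i+1 = m by omega, hcyc]
        · rw [show b + (i+1) = b + i + 1 by omega, Nat.mod_eq_of_lt hh]
      have hv2wrap : ∀ i, i ≤ m - d → m ≤ b + i → c2 i = c (b + i - m) := by
        intro i hi hbi
        rw [hv2 i hi, hmod2 i hbi (by omega)]
      -- the subcycle counts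
      have hA : ((range (d+1)).filter (fun i => ¬(c1 i ∈ I ∧ c1 (i+1) ∈ I))).card
          = ((Ico a b).filter (fun i => ¬(c i ∈ I ∧ c (i+1) ∈ I))).card
            + (if ¬(c b ∈ I ∧ c a ∈ I) then 1 else 0) := by
        rw [Finset.card_filter, Finset.card_filter, Finset.sum_range_succ]
        congr 1
        · rw [Finset.sum_Ico_eq_sum_range]
          apply Finset.sum_congr (by rw [hd])
          intro i hi
          rw [Finset.mem_range] at hi
          rw [hv1 i (by omega), hv1 (i+1) (by omega), show a + (i+1) = a + i + 1 by omega]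
        · rw [hv1 d le_rfl, hv1top, show a + d = b by omega]
      have hB : ((range (m - d + 1)).filter (fun i => ¬(c2 i ∈ I ∧ c2 (i+1) ∈ I))).card
          = (((Ico b m).filter (fun i => ¬(c i ∈ I ∧ c (i+1) ∈ I))).card
            + ((Ico 0 a).filter (fun i => ¬(c i ∈ I ∧ c (i+1) ∈ I))).card)
            + (if ¬(c a ∈ I ∧ c b ∈ I) then 1 else 0) := by
        rw [Finset.card_filter, Finset.card_filter, Finset.card_filter, Finset.sum_range_succ]
        congr 1
        · rw [Finset.range_eq_Ico,
            ← Finset.sum_Ico_consecutive _ (Nat.zero_le (m-b)) (show m - b ≤ m - d by omega)]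
          congr 1
          · rw [Finset.sum_Ico_eq_sum_range, Finset.sum_Ico_eq_sum_range]
            apply Finset.sum_congr (by congr 1 <;> omega)
            intro i hi
            rw [Finset.mem_range] at hi
            simp only [Nat.zero_add]
            rw [hv2 i (by omega), hmod1 i (by omega), hv2succ i (by omega) (by omega)]
          · rw [Finset.sum_Ico_eq_sum_range, Finset.sum_Ico_eq_sum_range]
            apply Finset.sum_congr (by congr 1 <;> omega)
            intro i hi
            rw [Finset.mem_range] at hi
            have hia : i < a := by omega
            simp only [Nat.zero_add]
            rw [hv2wrap (m - b + i) (by omega) (by omega),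
              show b + (m - b + i) - m = i by omega,
              show m - b + i + 1 = m - b + (i + 1) by omega,
              hv2wrap (m - b + (i+1)) (by omega) (by omega),
              show b + (m - b + (i+1)) - m = i + 1 by omega]
        · rw [hv2top, hv2wrap (m-d) le_rfl (by omega), show b + (m - d) - m = a by omega]
      have htot : ((range m).filter (fun i => ¬(c i ∈ I ∧ c (i+1) ∈ I))).card
          = ((Ico 0 a).filter (fun i => ¬(c i ∈ I ∧ c (i+1) ∈ I))).card
            + ((Ico a b).filter (fun i => ¬(c i ∈ I ∧ c (i+1) ∈ I))).card
            + ((Ico b m).filter (fun i => ¬(c i ∈ I ∧ c (i+1) ∈ I))).card := by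
        rw [Finset.card_filter, Finset.card_filter, Finset.card_filter, Finset.card_filter,
          Finset.range_eq_Ico,
          ← Finset.sum_Ico_consecutive _ (Nat.zero_le b) (le_of_lt hbm),
          ← Finset.sum_Ico_consecutive _ (Nat.zero_le a) (le_of_lt hab)]
      have hW : (if ¬(c b ∈ I ∧ c a ∈ I) then (1:ℕ) else 0)
          = (if ¬(c a ∈ I ∧ c b ∈ I) then (1:ℕ) else 0) := by
        by_cases h : c a ∈ I <;> by_cases h' : c b ∈ I <;> simp [h, h']
      have heq : ((range (d+1)).filter (fun i => ¬(c1 i ∈ I ∧ c1 (i+1) ∈ I))).card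
          + ((range (m-d+1)).filter (fun i => ¬(c2 i ∈ I ∧ c2 (i+1) ∈ I))).card
          = ((range m).filter (fun i => ¬(c i ∈ I ∧ c (i+1) ∈ I))).card
            + 2 * (if ¬(c a ∈ I ∧ c b ∈ I) then 1 else 0) := by
        rw [hA, hB, htot, hW]
        omega
      have hsub : Odd (((range (d+1)).filter (fun i => ¬(c1 i ∈ I ∧ c1 (i+1) ∈ I))).card)
          ∨ Odd (((range (m-d+1)).filter (fun i => ¬(c2 i ∈ I ∧ c2 (i+1) ∈ I))).card) := by
        rcases Nat.even_or_odd (((range (d+1)).filter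
            (fun i => ¬(c1 i ∈ I ∧ c1 (i+1) ∈ I))).card) with g1 | g1
        · rcases Nat.even_or_odd (((range (m-d+1)).filter
              (fun i => ¬(c2 i ∈ I ∧ c2 (i+1) ∈ I))).card) with g2 | g2
          · exfalso
            obtain ⟨x, hx⟩ := g1
            obtain ⟨y, hy⟩ := g2
            obtain ⟨z, hz⟩ := hodd
            omega
          · exact Or.inr g2
        · exact Or.inl g1
      have inj1 : ∀ i j, i < d+1 → j < d+1 → c1 i = c1 j → i = j := by
        intro i j hi hj hij
        rw [hv1 i (by omega), hv1 j (by omega)] at hij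
        have := hinj _ _ (show a + i < m by omega) (show a + j < m by omega) hij
        omega
      have cyc1 : c1 (d+1) = c1 0 := by
        rw [hv1top, hv1 0 (by omega), Nat.add_zero]
      have edge1 : ∀ i, i < d+1 → G.Adj (c1 i) (c1 (i+1)) := by
        intro i hi
        rcases eq_or_lt_of_le (show i ≤ d by omega) with hh | hh
        · rw [hh, hv1 d le_rfl, hv1top, show a + d = b by omega]
          exact hadj.symm
        · rw [hv1 i (by omega), hv1 (i+1) (by omega), show a + (i+1) = (a+i)+1 by omega]
          exact hedge (a+i) (by omega)
      have range1 : ∀ i, i < d+1 → ∃ x : Fin n, c1 i = e x := by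
        intro i hi
        simp only [hc1def]
        refine hrange _ ?_
        have := Nat.mod_lt i (show 0 < d+1 by omega)
        omega
      have inj2 : ∀ i j, i < m-d+1 → j < m-d+1 → c2 i = c2 j → i = j := by
        intro i j hi hj hij
        rw [hv2 i (by omega), hv2 j (by omega)] at hij
        have g1 : (b+i) % m < m := Nat.mod_lt _ (by omega)
        have g2 : (b+j) % m < m := Nat.mod_lt _ (by omega)
        have := hinj _ _ g1 g2 hij
        rcases Nat.lt_or_ge (b+i) m with w1 | w1 <;> rcases Nat.lt_or_ge (b+j) m with w2 | w2
        · rw [hmod1 i w1, hmod1 j w2] at this; omega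
        · rw [hmod1 i w1, hmod2 j w2 (by omega)] at this; omega
        · rw [hmod2 i w1 (by omega), hmod1 j w2] at this; omega
        · rw [hmod2 i w1 (by omega), hmod2 j w2 (by omega)] at this; omega
      have cyc2 : c2 (m-d+1) = c2 0 := by
        rw [hv2top, hv2 0 (by omega), Nat.add_zero, Nat.mod_eq_of_lt hbm]
      have edge2 : ∀ i, i < m-d+1 → G.Adj (c2 i) (c2 (i+1)) := by
        intro i hi
        rcases eq_or_lt_of_le (show i ≤ m - d by omega) with hh | hh
        · rw [hh, hv2wrap (m-d) le_rfl (by omega), show b + (m-d) - m = a by omega, hv2top]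
          exact hadj
        · rcases Nat.lt_or_ge (b + i) m with w1 | w1
          · rw [hv2 i (by omega), hmod1 i w1, hv2succ i (by omega) (by omega)]
            exact hedge (b+i) w1
          · rw [hv2wrap i (by omega) w1,
              hv2wrap (i+1) (by omega) (by omega),
              show b + (i+1) - m = (b + i - m) + 1 by omega]
            exact hedge (b+i-m) (by omega)
      have range2 : ∀ i, i < m-d+1 → ∃ x : Fin n, c2 i = e x := by
        intro i hi
        simp only [hc2def]
        exact hrange _ (Nat.mod_lt _ (by omega))
      rcases hsub with hodd1 | hodd2
      · exact IH (d+1) (by omega) (by omega) c1 inj1 cyc1 edge1 range1 hodd1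
      · exact IH (m-d+1) (by omega) (by omega) c2 inj2 cyc2 edge2 range2 hodd2
    · -- no chord: c is an induced cycle of length m in G, contradicting chordality
      push_neg at hch
      have nochord : ∀ a b, a < b → b < m → G.Adj (c a) (c b) →
          (b = a + 1 ∨ (a = 0 ∧ b = m - 1)) := by
        intro a b hab hbm hadj
        by_contra hcon
        push_neg at hcon
        exact hch a b hab hbm (by omega) (by omega) hadj
      refine (hG m (by omega)).false ⟨⟨fun x : Fin m => c x.val, ?_⟩, ?_⟩
      · intro x y h
        exact Fin.ext (hinj _ _ x.isLt y.isLt h)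
      · intro x y
        show G.Adj (c x.val) (c y.val) ↔ (cycleGraph m).Adj x y
        rw [cycleGraph_adj_iff_consec (by omega)]
        have hx := x.isLt; have hy := y.isLt
        constructor
        · intro h
          rcases Nat.lt_or_ge x.val y.val with hlt | hge
          · rcases nochord _ _ hlt hy h with h1 | h1
            · exact Or.inl (Or.inl h1)
            · exact Or.inr (Or.inr ⟨by omega, h1.1⟩)
          · have hne : x.val ≠ y.val := fun hh => h.ne (by rw [hh])
            have hlt : y.val < x.val := by omega
            rcases nochord _ _ hlt hx h.symm with h1 | h1
            · exact Or.inr (Or.inl h1)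
            · exact Or.inl (Or.inr ⟨by omega, h1.1⟩)
        · intro h
          rcases h with (h1 | h1) | (h1 | h1)
          · rw [h1]; exact hedge x.val hx
          · have := hedge x.val hx
            rw [h1.1, hcyc] at this
            rwa [h1.2]
          · rw [h1]; exact (hedge y.val hy).symm
          · have := hedge y.val hy
            rw [h1.1, hcyc] at this
            rw [h1.2]
            exact this.symm

open scoped Classical in
lemma no_odd_hole {V : Type*} (G : SimpleGraph V) (I : Set V) (hG : IsChordal G) :
    ¬ HasOddHole (removeInside G I) := by
  rintro ⟨n, hn5, hodd, ⟨e⟩⟩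
  haveI : NeZero n := ⟨by omega⟩
  set c : ℕ → V := fun i => e ((i : Fin n)) with hcdef
  have hcons : ∀ i : ℕ, i < n → (cycleGraph n).Adj (i : Fin n) ((i+1 : ℕ) : Fin n) := by
    intro i hi
    rw [cycleGraph_adj_iff_consec (by omega)]
    left
    rw [Fin.val_natCast, Fin.val_natCast, Nat.mod_eq_of_lt hi]
    rcases eq_or_lt_of_le (show i+1 ≤ n by omega) with hh | hh
    · exact Or.inr ⟨by omega, by rw [hh, Nat.mod_self]⟩
    · exact Or.inl (by rw [Nat.mod_eq_of_lt hh])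
  have hedge : ∀ i : ℕ, i < n → (removeInside G I).Adj (c i) (c (i+1)) := by
    intro i hi
    exact e.map_adj_iff.mpr (hcons i hi)
  apply removeInside_key G I hG (show 4 ≤ n by omega) e n (by omega) c
  · intro i j hi hj hij
    exact fin_cast_inj hi hj (e.injective hij)
  · show e ((n : ℕ) : Fin n) = e ((0 : ℕ) : Fin n)
    congr 1
    rw [Nat.cast_zero, Fin.natCast_self]
  · exact fun i hi => (hedge i hi).1
  · exact fun i hi => ⟨_, rfl⟩
  · have : (range n).filter (fun i => ¬(c i ∈ I ∧ c (i+1) ∈ I)) = range n := by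
      apply Finset.filter_true_of_mem
      intro i hi
      rw [Finset.mem_range] at hi
      exact (hedge i hi).2
    rw [this, Finset.card_range]
    exact hodd

lemma c4_false {V : Type*} {G : SimpleGraph V} (hG : IsChordal G) {w0 w1 w2 w3 : V}
    (h01 : G.Adj w0 w1) (h12 : G.Adj w1 w2) (h23 : G.Adj w2 w3) (h30 : G.Adj w3 w0)
    (h02 : ¬G.Adj w0 w2) (h13 : ¬G.Adj w1 w3) (n02 : w0 ≠ w2) (n13 : w1 ≠ w3) : False := by
  refine (hG 4 le_rfl).false ⟨⟨![w0, w1, w2, w3], ?_⟩, ?_⟩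
  · intro i j hij
    fin_cases i <;> fin_cases j <;>
      simp_all [h01.ne, h12.ne, h23.ne, h30.ne, h01.ne', h12.ne', h23.ne', h30.ne',
        n02, n02.symm, n13, n13.symm]
  · have h20 : ¬G.Adj w2 w0 := fun h => h02 h.symm
    have h31 : ¬G.Adj w3 w1 := fun h => h13 h.symm
    intro i j
    show G.Adj (![w0, w1, w2, w3] i) (![w0, w1, w2, w3] j) ↔ (cycleGraph 4).Adj i j
    fin_cases i <;> fin_cases j <;>
      simp [h01, h12, h23, h30, h01.symm, h12.symm, h23.symm, h30.symm,
        h02, h13, h20, h31, SimpleGraph.irrefl] <;> decide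

lemma consec_mod {n v p q : ℕ} (hv : v < n) (hp : p < n) (hq : q < n) :
    Consec n ((v+p) % n) ((v+q) % n) ↔ (p+1) % n = q := by
  have bA : (v+p) % n < n := Nat.mod_lt _ (by omega)
  have bB : (v+q) % n < n := Nat.mod_lt _ (by omega)
  have bC : (p+1) % n < n := Nat.mod_lt _ (by omega)
  have hA := (mod_eq_iff' (show 0 < n by omega) (show v+p < 2*n by omega) bA).mp rfl
  have hB := (mod_eq_iff' (show 0 < n by omega) (show v+q < 2*n by omega) bB).mp rfl
  have hC := (mod_eq_iff' (show 0 < n by omega) (show p+1 < 2*n by omega) bC).mp rfl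
  simp only [Consec]
  omega

lemma fin5_mul2_inj : ∀ i j : Fin 5, 2*i = 2*j → i = j := by decide

lemma fin5_key : ∀ i j : Fin 5,
    ((2*i ≠ 2*j ∧ ¬(SimpleGraph.cycleGraph 5).Adj (2*i) (2*j)) ↔
      (SimpleGraph.cycleGraph 5).Adj i j) := by decide

lemma no_odd_antihole {V : Type*} (G : SimpleGraph V) (I : Set V) (hG : IsChordal G) :
    ¬ HasOddHole (removeInside G I)ᶜ := by
  rintro ⟨n, hn5, hodd, ⟨e⟩⟩
  haveI : NeZero n := ⟨by omega⟩
  have hG' : ∀ a b : Fin n, (removeInside G I).Adj (e a) (e b) ↔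
      (a ≠ b ∧ ¬(cycleGraph n).Adj a b) := by
    intro a b
    have h := e.map_adj_iff (v := a) (w := b)
    rw [compl_adj] at h
    constructor
    · intro h'
      refine ⟨fun hh => h'.ne (by rw [hh]), fun hc => ?_⟩
      exact (h.mpr hc).2 h'
    · rintro ⟨hne, hnadj⟩
      by_contra hno
      exact hnadj (h.mp ⟨e.injective.ne hne, hno⟩)
  by_cases h5 : n = 5
  · subst h5
    refine no_odd_hole G I hG ⟨5, le_rfl, by decide, ⟨⟨⟨fun i => e (2*i), ?_⟩, ?_⟩⟩⟩
    · intro i j hij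
      exact fin5_mul2_inj i j (e.injective hij)
    · intro i j
      exact (hG' (2*i) (2*j)).trans (fin5_key i j)
  · have hn7 : 7 ≤ n := by
      obtain ⟨k, hk⟩ := hodd
      omega
    -- adjacency between shifted vertices
    have hadj_shift : ∀ (x : Fin n) (p q : ℕ), p < n → q < n →
        ((cycleGraph n).Adj (x + (p:Fin n)) (x + (q:Fin n)) ↔
          ((p+1) % n = q ∨ (q+1) % n = p)) := by
      intro x p q hp hq
      rw [cycleGraph_adj_iff_consec (by omega)]
      have hx : ∀ r : ℕ, (x + (r:Fin n)).val = (x.val + r) % n := by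
        intro r
        rw [Fin.val_add, Fin.val_natCast, Nat.add_mod_mod]
      rw [hx p, hx q, consec_mod x.isLt hp hq, consec_mod x.isLt hq hp]
    have hne_shift : ∀ (x : Fin n) (p q : ℕ), p < n → q < n → p ≠ q →
        x + (p:Fin n) ≠ x + (q:Fin n) := by
      intro x p q hp hq hpq h
      exact hpq (fin_cast_inj hp hq (add_left_cancel h))
    have hstrict : ∀ (x : Fin n) (p q : ℕ), p < n → q < n → p ≠ q →
        ¬((p+1)%n = q ∨ (q+1)%n = p) →
        (removeInside G I).Adj (e (x + (p:Fin n))) (e (x + (q:Fin n))) := by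
      intro x p q hp hq hpq hnadj
      rw [hG']
      exact ⟨hne_shift x p q hp hq hpq, by rw [hadj_shift x p q hp hq]; exact hnadj⟩
    have hcons : ∀ (x : Fin n) (p : ℕ), p + 1 < n →
        ¬ (removeInside G I).Adj (e (x + (p:Fin n))) (e (x + ((p+1:ℕ):Fin n))) := by
      intro x p hp h
      rw [hG'] at h
      exact h.2 (by
        rw [hadj_shift x p (p+1) (by omega) hp]
        exact Or.inl (Nat.mod_eq_of_lt hp))
    have subclaim : ∀ (x : Fin n), ¬ G.Adj (e (x + ((0:ℕ):Fin n))) (e (x + ((1:ℕ):Fin n))) →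
        ∀ k : ℕ, 3 ≤ k → k + 3 ≤ n →
        e (x + ((k:ℕ):Fin n)) ∈ I ∧ e (x + ((k+1:ℕ):Fin n)) ∈ I := by
      intro x hx k hk3 hkn
      by_contra hI
      have hnadj2 : ¬ G.Adj (e (x + ((k:ℕ):Fin n))) (e (x + ((k+1:ℕ):Fin n))) := by
        intro hadj2
        exact hcons x k (by omega) ⟨hadj2, fun hb => hI hb⟩
      refine c4_false hG (w0 := e (x + ((0:ℕ):Fin n))) (w1 := e (x + ((k:ℕ):Fin n)))
        (w2 := e (x + ((1:ℕ):Fin n))) (w3 := e (x + ((k+1:ℕ):Fin n)))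
        ?_ ?_ ?_ ?_ hx hnadj2 ?_ ?_
      · exact (hstrict x 0 k (by omega) (by omega) (by omega)
          (by rw [Nat.mod_eq_of_lt (show 0+1 < n by omega),
                Nat.mod_eq_of_lt (show k+1 < n by omega)]; omega)).1
      · exact (hstrict x k 1 (by omega) (by omega) (by omega)
          (by rw [Nat.mod_eq_of_lt (show k+1 < n by omega),
                Nat.mod_eq_of_lt (show 1+1 < n by omega)]; omega)).1
      · exact (hstrict x 1 (k+1) (by omega) (by omega) (by omega)
          (by rw [Nat.mod_eq_of_lt (show 1+1 < n by omega),
                Nat.mod_eq_of_lt (show k+1+1 < n by omega)]; omega)).1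
      · exact (hstrict x (k+1) 0 (by omega) (by omega) (by omega)
          (by rw [Nat.mod_eq_of_lt (show k+1+1 < n by omega),
                Nat.mod_eq_of_lt (show 0+1 < n by omega)]; omega)).1
      · exact e.injective.ne (hne_shift x 0 1 (by omega) (by omega) (by omega))
      · exact e.injective.ne (hne_shift x k (k+1) (by omega) (by omega) (by omega))
    by_cases hA : ∃ x : Fin n, ¬ G.Adj (e (x + ((0:ℕ):Fin n))) (e (x + ((1:ℕ):Fin n)))
    · obtain ⟨x, hx⟩ := hA
      have h3 := subclaim x hx 3 (by omega) (by omega)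
      have h4 := subclaim x hx 4 (by omega) (by omega)
      have hb := (hstrict x 3 (4+1) (by omega) (by omega) (by omega)
        (by rw [Nat.mod_eq_of_lt (show 3+1 < n by omega),
              Nat.mod_eq_of_lt (show 4+1+1 < n by omega)]; omega)).2
      exact hb ⟨h3.1, h4.2⟩
    · push_neg at hA
      have hI : ∀ x : Fin n, e (x + ((0:ℕ):Fin n)) ∈ I := by
        intro x
        have h1 := hA x
        have h2 := hcons x 0 (by omega)
        by_contra hni
        exact h2 ⟨h1, fun hb => hni hb.1⟩
      have hb := (hstrict 0 0 2 (by omega) (by omega) (by omega)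
        (by rw [Nat.mod_eq_of_lt (show 0+1 < n by omega),
              Nat.mod_eq_of_lt (show 2+1 < n by omega)]; omega)).2
      refine hb ⟨hI 0, ?_⟩
      have := hI (0 + ((2:ℕ):Fin n))
      simpa using this

/-- If `G` is chordal and `I ⊆ V(G)`, then `G′ = G − E(G[I])` is perfect. -/
theorem stmt14 (G : SimpleGraph V) (hG : IsChordal G) (I : Set V) :
    IsPerfect (removeInside G I) := by
  exact ⟨no_odd_hole G I hG, no_odd_antihole G I hG⟩
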